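/- arXiv:1308.2859 — 2 statements merged into one kernel-verified Lean document; each statement's English description precedes it below -/
import Mathlib

section
/- For 0 < q < 1 and n ∈ ℤ, the ₁φ₁ q-Bessel function of integer order satisfies J_{-n}(w; q²) = (-q)^n J_n(w q^n; q²). -/
/-- The finite q-shifted factorial `(a;q)_k` over `ℂ`. -/
noncomputable def qpC (q a : ℂ) (k : ℕ) : ℂ := ∏ i ∈ Finset.range k, (1 - a * q ^ i)

/-- The infinite q-shifted factorial `(a;q)_∞` over `ℂ`. -/
noncomputable def qpInfC (q a : ℂ) : ℂ := ∏' i : ℕ, (1 - a * q ^ i)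

/-- The Wall polynomial `p_n(x;a;q) = ₂φ₁(q^{-n},0;aq;q,qx)` over `ℂ`. -/
noncomputable def wallC (n : ℕ) (x a q : ℂ) : ℂ :=
  ∑ j ∈ Finset.range (n + 1),
    qpC q (q ^ (-(n : ℤ))) j / (qpC q (a * q) j * qpC q q j) * (q * x) ^ j
/-- The `₁φ₁` q-Bessel function `J_n(x;q²)` of integer order `n` with complex argument,
in the combined form encoding the standard convention for negative integer order. -/
noncomputable def JzC (q : ℝ) (n : ℤ) (x : ℂ) : ℂ :=
  x ^ n * (∑' k : ℕ, (-1) ^ k * (q : ℂ) ^ (k * (k - 1)) * ((q : ℂ) ^ 2 * x ^ 2) ^ k *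
      qpInfC ((q : ℂ) ^ 2) ((q : ℂ) ^ (2 * n + 2 + 2 * (k : ℤ))) /
        qpC ((q : ℂ) ^ 2) ((q : ℂ) ^ 2) k) /
    qpInfC ((q : ℂ) ^ 2) ((q : ℂ) ^ 2)

section aux

lemma qpC_add (q a : ℂ) (j m : ℕ) :
    qpC q a (j + m) = qpC q a j * qpC q (a * q ^ j) m := by
  unfold qpC
  rw [Finset.prod_range_add]
  congr 1
  refine Finset.prod_congr rfl fun i _ => ?_
  rw [pow_add]; ring

lemma qpInfC_eq_zero {q a : ℂ} (i : ℕ) (h : a * q ^ i = 1) : qpInfC q a = 0 := by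
  have h0 : HasProd (fun j : ℕ => 1 - a * q ^ j) 0 := by
    unfold HasProd
    refine Filter.Tendsto.congr' ?_ tendsto_const_nhds
    filter_upwards [Filter.eventually_ge_atTop ({i} : Finset ℕ)] with s hs
    refine (Finset.prod_eq_zero (hs (Finset.mem_singleton_self i)) ?_).symm
    rw [h]; ring
  rw [qpInfC]
  exact h0.tprod_eq

variable {q : ℝ} (hq0 : 0 < q) (hq1 : q < 1)
include hq0 hq1

lemma one_sub_q_pow_ne {m : ℕ} (hm : m ≠ 0) : (1 : ℂ) - (q : ℂ) ^ m ≠ 0 := by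
  have h1 : (q : ℝ) ^ m < 1 := pow_lt_one₀ hq0.le hq1 hm
  have hr : (1 - q ^ m : ℝ) ≠ 0 := by nlinarith
  exact_mod_cast hr

lemma factor_ne {N i : ℕ} (hN : N ≠ 0) :
    (1 : ℂ) - (q : ℂ) ^ N * ((q : ℂ) ^ 2) ^ i ≠ 0 := by
  have := one_sub_q_pow_ne hq0 hq1 (m := N + 2 * i) (by omega)
  rwa [pow_add, pow_mul] at this

lemma qpC_ne_zero {N : ℕ} (hN : N ≠ 0) (m : ℕ) :
    qpC ((q : ℂ) ^ 2) ((q : ℂ) ^ N) m ≠ 0 := by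
  unfold qpC
  rw [Finset.prod_ne_zero_iff]
  exact fun i _ => factor_ne hq0 hq1 hN

lemma mult {N : ℕ} (hN : N ≠ 0) :
    Multipliable (fun i : ℕ => (1 : ℂ) - (q : ℂ) ^ N * ((q : ℂ) ^ 2) ^ i) := by
  have hfn : ∀ i : ℕ, (1 : ℂ) - (q : ℂ) ^ N * ((q : ℂ) ^ 2) ^ i ≠ 0 :=
    fun i => factor_ne hq0 hq1 hN
  have hgeo : Summable (fun i : ℕ => (3 / 2 : ℝ) * (q ^ N * (q ^ 2) ^ i)) := by
    apply Summable.mul_left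
    apply Summable.mul_left
    exact summable_geometric_of_lt_one (by positivity) (pow_lt_one₀ hq0.le hq1 (by norm_num))
  have hlog : Summable (fun i : ℕ =>
      Complex.log ((1 : ℂ) - (q : ℂ) ^ N * ((q : ℂ) ^ 2) ^ i)) := by
    apply Summable.of_norm_bounded_eventually_nat hgeo
    have hto : Filter.Tendsto (fun i : ℕ => q ^ N * (q ^ 2) ^ i) Filter.atTop (nhds 0) := by
      simpa using (tendsto_pow_atTop_nhds_zero_of_lt_one (by positivity)
        (pow_lt_one₀ hq0.le hq1 (by norm_num) : q ^ 2 < 1)).const_mul (q ^ N)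
    filter_upwards [hto.eventually (eventually_le_nhds (by norm_num : (0:ℝ) < 1/2))] with i hi
    have hnorm : ‖-((q : ℂ) ^ N * ((q : ℂ) ^ 2) ^ i)‖ = q ^ N * (q ^ 2) ^ i := by
      rw [norm_neg]
      have : ((q : ℂ) ^ N * ((q : ℂ) ^ 2) ^ i) = ((q ^ N * (q ^ 2) ^ i : ℝ) : ℂ) := by
        push_cast; ring
      rw [this, Complex.norm_real, Real.norm_of_nonneg (by positivity)]
    have hhalf : ‖-((q : ℂ) ^ N * ((q : ℂ) ^ 2) ^ i)‖ ≤ 1 / 2 := by rw [hnorm]; exact hi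
    have := Complex.norm_log_one_add_half_le_self hhalf
    rw [hnorm] at this
    calc ‖Complex.log ((1 : ℂ) - (q : ℂ) ^ N * ((q : ℂ) ^ 2) ^ i)‖
        = ‖Complex.log (1 + -((q : ℂ) ^ N * ((q : ℂ) ^ 2) ^ i))‖ := by ring_nf
      _ ≤ 3 / 2 * (q ^ N * (q ^ 2) ^ i) := this
  exact Complex.multipliable_of_summable_log hlog

/-- Equivalence between `ℕ` and the complement of `range m`. -/
def complRangeEquiv (m : ℕ) : ℕ ≃ ((↑(Finset.range m) : Set ℕ)ᶜ : Set ℕ) where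
  toFun := fun j => ⟨j + m, by simp⟩
  invFun := fun i => i.1 - m
  left_inv := fun j => by simp
  right_inv := fun i => Subtype.ext (Nat.sub_add_cancel (by
    have := i.2
    simp only [Set.mem_compl_iff, Finset.coe_range, Set.mem_Iio, not_lt] at this
    exact this))

omit hq0 hq1 in
lemma tprod_split (f : ℕ → ℂ) (m : ℕ) (h : Multipliable fun i => f (i + m)) :
    ∏' i, f i = (∏ i ∈ Finset.range m, f i) * ∏' i, f (i + m) := by
  obtain ⟨P, hP⟩ := h
  have hc : HasProd (f ∘ (↑) : ((↑(Finset.range m) : Set ℕ)ᶜ : Set ℕ) → ℂ) P := by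
    refine (Equiv.hasProd_iff (complRangeEquiv m)).mp ?_
    have hfe : ((f ∘ Subtype.val) ∘ ⇑(complRangeEquiv m)) = fun j => f (j + m) := by
      funext j; rfl
    rw [hfe]
    exact hP
  have hs : HasProd (f ∘ (↑) : (↑(Finset.range m) : Set ℕ) → ℂ)
      (∏ i ∈ Finset.range m, f i) := (Finset.range m).hasProd f
  rw [(hs.mul_compl hc).tprod_eq, hP.tprod_eq]

lemma qpInfC_split {N : ℕ} (hN : N ≠ 0) (m : ℕ) :
    qpInfC ((q : ℂ) ^ 2) ((q : ℂ) ^ N) =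
      qpC ((q : ℂ) ^ 2) ((q : ℂ) ^ N) m *
        qpInfC ((q : ℂ) ^ 2) ((q : ℂ) ^ N * ((q : ℂ) ^ 2) ^ m) := by
  have hmul : Multipliable (fun i : ℕ => (1 : ℂ) - (q : ℂ) ^ N * ((q : ℂ) ^ 2) ^ (i + m)) :=
    (mult hq0 hq1 (N := N + 2 * m) (by omega)).congr fun i => by
      rw [pow_add ((q : ℂ) ^ 2) i m, pow_add, pow_mul]; ring
  unfold qpInfC qpC
  rw [tprod_split (fun i => (1 : ℂ) - (q : ℂ) ^ N * ((q : ℂ) ^ 2) ^ i) m hmul]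
  congr 1
  refine tprod_congr fun i => ?_
  rw [pow_add]; ring

omit hq0 hq1 in
lemma mul_pred_add (k : ℕ) : k * (k - 1) + 2 * k = k * (k + 1) := by
  cases k with
  | zero => rfl
  | succ i => simp [Nat.succ_sub_one]; ring

omit hq0 hq1 in
lemma pow_pred_eq (x : ℂ) (hx : x ≠ 0) (k : ℕ) :
    x ^ (k * (k - 1)) = x ^ (k * (k + 1)) / (x ^ 2) ^ k := by
  rw [eq_div_iff (pow_ne_zero _ (pow_ne_zero _ hx)), ← pow_mul, ← pow_add, mul_pred_add]


lemma pointwise (m j : ℕ) (hm : m ≠ 0) (w : ℂ) :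
    (-1) ^ (j + m) * (q : ℂ) ^ ((j + m) * ((j + m) - 1)) * ((q : ℂ) ^ 2 * w ^ 2) ^ (j + m) *
        qpInfC ((q : ℂ) ^ 2) ((q : ℂ) ^ (2 * -(m : ℤ) + 2 + 2 * ((j + m : ℕ) : ℤ))) /
        qpC ((q : ℂ) ^ 2) ((q : ℂ) ^ 2) (j + m)
      = (w ^ m * ((-(q : ℂ)) ^ m * (w * (q : ℂ) ^ m) ^ m)) *
        ((-1) ^ j * (q : ℂ) ^ (j * (j - 1)) * ((q : ℂ) ^ 2 * (w * (q : ℂ) ^ m) ^ 2) ^ j *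
          qpInfC ((q : ℂ) ^ 2) ((q : ℂ) ^ (2 * (m : ℤ) + 2 + 2 * (j : ℤ))) /
          qpC ((q : ℂ) ^ 2) ((q : ℂ) ^ 2) j) := by
  have hQ : (q : ℂ) ≠ 0 := by exact_mod_cast hq0.ne'
  have h1 : (q : ℂ) ^ (2 * -(m : ℤ) + 2 + 2 * ((j + m : ℕ) : ℤ)) = (q : ℂ) ^ (2 * j + 2) := by
    rw [← zpow_natCast (q : ℂ) (2 * j + 2)]
    congr 1 <;> omega
  have h2 : (q : ℂ) ^ (2 * (m : ℤ) + 2 + 2 * (j : ℤ)) = (q : ℂ) ^ (2 * m + 2 + 2 * j) := by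
    rw [← zpow_natCast (q : ℂ) (2 * m + 2 + 2 * j)]
    congr 1 <;> omega
  rw [h1, h2]
  rw [qpInfC_split hq0 hq1 (N := 2 * j + 2) (by omega) m]
  have h3 : (q : ℂ) ^ (2 * j + 2) * ((q : ℂ) ^ 2) ^ m = (q : ℂ) ^ (2 * m + 2 + 2 * j) := by
    rw [← pow_mul, ← pow_add]
    congr 1 <;> omega
  rw [h3]
  rw [qpC_add ((q : ℂ) ^ 2) ((q : ℂ) ^ 2) j m]
  have h4 : (q : ℂ) ^ 2 * ((q : ℂ) ^ 2) ^ j = (q : ℂ) ^ (2 * j + 2) := by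
    rw [← pow_mul, ← pow_add]
    congr 1 <;> omega
  rw [h4]
  have hP : qpC ((q : ℂ) ^ 2) ((q : ℂ) ^ (2 * j + 2)) m ≠ 0 :=
    qpC_ne_zero hq0 hq1 (by omega) m
  have hD : qpC ((q : ℂ) ^ 2) ((q : ℂ) ^ 2) j ≠ 0 :=
    qpC_ne_zero hq0 hq1 (N := 2) (by omega) j
  rw [pow_pred_eq (q : ℂ) hQ (j + m), pow_pred_eq (q : ℂ) hQ j]
  field_simp
  ring

lemma key (m : ℕ) (w : ℂ) :
    JzC q (-(m : ℤ)) w = (-(q : ℂ)) ^ m * JzC q (m : ℤ) (w * (q : ℂ) ^ m) := by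
  have hQ : (q : ℂ) ≠ 0 := by exact_mod_cast hq0.ne'
  rcases Nat.eq_zero_or_pos m with rfl | hm
  · norm_num [JzC]
  have hmz : (m : ℤ) ≠ 0 := by exact_mod_cast hm.ne'
  rcases eq_or_ne w 0 with rfl | hw
  · rw [JzC, JzC, zero_zpow _ (neg_ne_zero.mpr hmz), zero_mul, zero_div, zero_mul,
      zero_zpow _ hmz, zero_mul, zero_div, mul_zero]
  · rw [JzC, JzC]
    have hre : (∑' (k : ℕ), (-1) ^ k * (q : ℂ) ^ (k * (k - 1)) * ((q : ℂ) ^ 2 * w ^ 2) ^ k *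
        qpInfC ((q : ℂ) ^ 2) ((q : ℂ) ^ (2 * -(m : ℤ) + 2 + 2 * (k : ℤ))) /
          qpC ((q : ℂ) ^ 2) ((q : ℂ) ^ 2) k)
      = ∑' (j : ℕ), ((-1) ^ (j + m) * (q : ℂ) ^ ((j + m) * ((j + m) - 1)) *
          ((q : ℂ) ^ 2 * w ^ 2) ^ (j + m) *
          qpInfC ((q : ℂ) ^ 2) ((q : ℂ) ^ (2 * -(m : ℤ) + 2 + 2 * ((j + m : ℕ) : ℤ))) /
            qpC ((q : ℂ) ^ 2) ((q : ℂ) ^ 2) (j + m)) := by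
      refine (Function.Injective.tsum_eq (add_left_injective m) ?_).symm
      intro k hk
      rw [Function.mem_support] at hk
      rcases le_or_gt m k with h | h
      · exact ⟨k - m, by simp; omega⟩
      · exfalso
        apply hk
        have hzero : qpInfC ((q : ℂ) ^ 2) ((q : ℂ) ^ (2 * -(m : ℤ) + 2 + 2 * (k : ℤ))) = 0 := by
          apply qpInfC_eq_zero (m - 1 - k)
          rw [← pow_mul, ← zpow_natCast (q : ℂ) (2 * (m - 1 - k)), ← zpow_add₀ hQ,
            show 2 * -(m : ℤ) + 2 + 2 * (k : ℤ) + ((2 * (m - 1 - k) : ℕ) : ℤ) = 0 by omega]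
          exact zpow_zero _
        rw [hzero, mul_zero, zero_div]
    rw [hre, tsum_congr (fun j => pointwise hq0 hq1 m j hm.ne' w), tsum_mul_left,
      zpow_natCast, ← mul_div_assoc]
    congr 1
    rw [zpow_neg, zpow_natCast]
    field_simp

end aux

/-- `J_{-n}(w;q²) = (-q)^n J_n(wq^n;q²)` for integer order. -/
theorem qBessel_negative_order (q : ℝ) (hq0 : 0 < q) (hq1 : q < 1) (n : ℤ) (w : ℂ) :
    JzC q (-n) w = (-(q : ℂ)) ^ n * JzC q n (w * (q : ℂ) ^ n) := by
  have hQ : (q : ℂ) ≠ 0 := by exact_mod_cast hq0.ne'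
  obtain ⟨m, rfl | rfl⟩ := Int.eq_nat_or_neg n
  · rw [zpow_natCast, zpow_natCast]
    exact key hq0 hq1 m w
  · rw [neg_neg]
    have h := key hq0 hq1 m (w * (q : ℂ) ^ (-(m : ℤ)))
    have harg : w * (q : ℂ) ^ (-(m : ℤ)) * (q : ℂ) ^ m = w := by
      rw [mul_assoc, ← zpow_natCast (q : ℂ) m, ← zpow_add₀ hQ]
      simp
    rw [harg] at h
    rw [h, ← mul_assoc,
      show (-(q : ℂ)) ^ (-(m : ℤ)) * (-(q : ℂ)) ^ m = 1 by
        rw [← zpow_natCast (-(q : ℂ)) m, ← zpow_add₀ (neg_ne_zero.mpr hQ)]; simp,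
      one_mul]
end

section
/- Let 0 < q < 1 and let U : ℓ²(ℕ)⊗ℓ²(ℤ) → ℓ²(ℕ)⊗ℓ²(ℤ) be the unitary e_{n,k} ↦ e_{n,n+k}. With X, Z, Y acting on ℓ²(ℕ) as in the Podleś sphere representation and α, γ the quantum SU(2) operators on ℓ²(ℕ)⊗ℓ²(ℤ), one has U(X⊗1)U* = -γ*α, U(Z⊗1)U* = γ*γ, and U(Y⊗1)U* = -α*γ. -/
/-- `ℓ²(ℕ × ℤ) ≅ ℓ²(ℕ) ⊗ ℓ²(ℤ)` with complex coefficients. -/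
noncomputable abbrev l2NZ : Type := lp (fun _ : ℕ × ℤ => ℂ) 2

/-- The standard orthonormal basis vector `e_{n,k}` of `ℓ²(ℕ) ⊗ ℓ²(ℤ)`. -/
noncomputable def eNZ (n : ℕ) (k : ℤ) : l2NZ := lp.single 2 (n, k) 1

noncomputable def bNZ : HilbertBasis (ℕ × ℤ) ℂ l2NZ := default

lemma bNZ_eq (i : ℕ × ℤ) : bNZ i = eNZ i.1 i.2 := by
  classical
  rw [← bNZ.repr_symm_single]
  rfl

lemma inner_eNZ (m n : ℕ) (l k : ℤ) :
    (inner ℂ (eNZ m l) (eNZ n k) : ℂ) = if m = n ∧ l = k then 1 else 0 := by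
  simp [eNZ, lp.inner_single_left, lp.single_apply, Pi.single_apply, Prod.ext_iff, RCLike.inner_apply,
    and_comm]

lemma l2_ext {f g : l2NZ} (h : ∀ (n : ℕ) (k : ℤ),
    (inner ℂ (eNZ n k) f : ℂ) = inner ℂ (eNZ n k) g) : f = g := by
  apply lp.ext; funext i
  have := h i.1 i.2
  simpa [eNZ, lp.inner_single_left, RCLike.inner_apply] using this

lemma clm_ext {S T : l2NZ →L[ℂ] l2NZ} (h : ∀ (n : ℕ) (k : ℤ), S (eNZ n k) = T (eNZ n k)) :
    S = T := by
  refine ContinuousLinearMap.ext_on (s := Set.range fun i : ℕ × ℤ => eNZ i.1 i.2) ?_ ?_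
  · have hd := bNZ.dense_span
    rw [Submodule.dense_iff_topologicalClosure_eq_top]
    rw [show (fun i : ℕ × ℤ => eNZ i.1 i.2) = ⇑bNZ from funext fun i => (bNZ_eq i).symm]
    exact hd
  · rintro x ⟨i, rfl⟩; exact h i.1 i.2

lemma conj_real_pow (q : ℝ) (m : ℕ) : (starRingEnd ℂ) ((q : ℂ) ^ m) = (q : ℂ) ^ m := by
  simp [← Complex.ofReal_pow, Complex.conj_ofReal]

/-- with `U : e_{n,k} ↦ e_{n,n+k}` unitary, `X, Z, Y` the Podleś sphere
operators acting on the first leg, and `α, γ` the quantum `SU(2)` operators,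
`U(X⊗1)U* = -γ*α`, `U(Z⊗1)U* = γ*γ`, `U(Y⊗1)U* = -α*γ`. -/
theorem podles_embedding_via_U (q : ℝ) (hq0 : 0 < q) (hq1 : q < 1)
    (U X Y Z α γ : l2NZ →L[ℂ] l2NZ)
    (hU : ∀ (n : ℕ) (k : ℤ), U (eNZ n k) = eNZ n (n + k))
    (hX0 : ∀ k : ℤ, X (eNZ 0 k) = 0)
    (hX : ∀ (n : ℕ) (k : ℤ), X (eNZ (n + 1) k) =
      (-(q : ℂ) ^ n * (Real.sqrt (1 - q ^ (2 * n + 2)) : ℂ)) • eNZ n k)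
    (hZ : ∀ (n : ℕ) (k : ℤ), Z (eNZ n k) = ((q : ℂ) ^ (2 * n)) • eNZ n k)
    (hY : ∀ (n : ℕ) (k : ℤ), Y (eNZ n k) =
      (-(q : ℂ) ^ n * (Real.sqrt (1 - q ^ (2 * n + 2)) : ℂ)) • eNZ (n + 1) k)
    (hα0 : ∀ k : ℤ, α (eNZ 0 k) = 0)
    (hα : ∀ (n : ℕ) (k : ℤ), α (eNZ (n + 1) k) =
      ((Real.sqrt (1 - q ^ (2 * n + 2)) : ℂ)) • eNZ n k)
    (hγ : ∀ (n : ℕ) (k : ℤ), γ (eNZ n k) = ((q : ℂ) ^ n) • eNZ n (k + 1)) :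
    U * X * ContinuousLinearMap.adjoint U = -(ContinuousLinearMap.adjoint γ * α) ∧
    U * Z * ContinuousLinearMap.adjoint U = ContinuousLinearMap.adjoint γ * γ ∧
    U * Y * ContinuousLinearMap.adjoint U = -(ContinuousLinearMap.adjoint α * γ) := by
  have adjU : ∀ (n : ℕ) (k : ℤ),
      ContinuousLinearMap.adjoint U (eNZ n k) = eNZ n (k - n) := by
    intro n k
    apply l2_ext
    intro m l
    rw [ContinuousLinearMap.adjoint_inner_right, hU, inner_eNZ, inner_eNZ]
    refine if_congr ?_ rfl rfl
    constructor
    · rintro ⟨rfl, h⟩; exact ⟨rfl, by omega⟩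
    · rintro ⟨rfl, h⟩; exact ⟨rfl, by omega⟩
  have adjγ : ∀ (n : ℕ) (k : ℤ),
      ContinuousLinearMap.adjoint γ (eNZ n k) = ((q : ℂ) ^ n) • eNZ n (k - 1) := by
    intro n k
    apply l2_ext
    intro m l
    rw [ContinuousLinearMap.adjoint_inner_right, hγ, inner_smul_left, inner_smul_right,
      inner_eNZ, inner_eNZ, conj_real_pow]
    by_cases h : m = n ∧ l = k - 1
    · obtain ⟨rfl, h2⟩ := h
      subst h2
      rw [if_pos ⟨rfl, by ring⟩, if_pos ⟨rfl, rfl⟩]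
    · rw [if_neg (fun ⟨a, b⟩ => h ⟨a, by omega⟩), if_neg h, mul_zero, mul_zero]
  have adjα : ∀ (n : ℕ) (k : ℤ),
      ContinuousLinearMap.adjoint α (eNZ n k) =
        ((Real.sqrt (1 - q ^ (2 * n + 2)) : ℂ)) • eNZ (n + 1) k := by
    intro n k
    apply l2_ext
    intro m l
    rw [ContinuousLinearMap.adjoint_inner_right, inner_smul_right, inner_eNZ]
    cases m with
    | zero =>
      rw [hα0, inner_zero_left, if_neg (by omega : ¬(0 = n + 1 ∧ l = k)), mul_zero]
    | succ m =>
      rw [hα, inner_smul_left, inner_eNZ, Complex.conj_ofReal]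
      by_cases h : m = n ∧ l = k
      · obtain ⟨rfl, rfl⟩ := h
        rw [if_pos ⟨rfl, rfl⟩, if_pos ⟨rfl, rfl⟩]
      · rw [if_neg h, if_neg (fun ⟨a, b⟩ => h ⟨by omega, b⟩), mul_zero, mul_zero]
  refine ⟨?_, ?_, ?_⟩
  · apply clm_ext
    intro n k
    simp only [ContinuousLinearMap.mul_apply, ContinuousLinearMap.neg_apply, adjU]
    cases n with
    | zero =>
      simp [hX0, hα0]
    | succ n =>
      rw [hX, hα, map_smul, map_smul, hU, adjγ, smul_smul]
      rw [show ((n : ℤ) + (k - ((n : ℕ) + 1 : ℕ))) = k - 1 by push_cast; ring]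
      rw [← neg_smul]
      congr 1
      ring
  · apply clm_ext
    intro n k
    simp only [ContinuousLinearMap.mul_apply, adjU]
    rw [hZ, map_smul, hU, hγ, map_smul, adjγ, smul_smul]
    have : ((n : ℤ) + (k - n)) = k := by ring
    rw [this]
    have h2 : (k + 1 - 1 : ℤ) = k := by ring
    rw [h2, ← pow_add, two_mul]
  · apply clm_ext
    intro n k
    simp only [ContinuousLinearMap.mul_apply, ContinuousLinearMap.neg_apply, adjU]
    rw [hY, map_smul, hU, hγ, map_smul, adjα, smul_smul]
    rw [show (((n + 1 : ℕ) : ℤ) + (k - n)) = k + 1 by push_cast; ring]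
    rw [← neg_smul]
    congr 1
    ring
end
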